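/- Let M be a {0,1}-matrix with k diagonal zeros and ℓ diagonal ones with kℓ > 0, and let D be a minimal M-obstruction. If D contains neither a pair of false twins nor a pair of true twins, then |V(D)| ≤ (k+1)(ℓ+1). -/

import Mathlib

variable {V : Type*}

/-- `w` distinguishes distinct vertices `u` and `v`: exactly one of `u,v` is an
in-neighbour of `w`, or exactly one of `u,v` is an out-neighbour of `w`. -/
def Distinguishes (A : V → V → Prop) (w u v : V) : Prop :=
  w ≠ u ∧ w ≠ v ∧
    ((A u w ∧ ¬ A v w) ∨ (A v w ∧ ¬ A u w) ∨ (A w u ∧ ¬ A w v) ∨ (A w v ∧ ¬ A w u))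

/-- `u,v` are false twins in the induced subdigraph on `U`. -/
def FalseTwinsOn (A : V → V → Prop) (U : Set V) (u v : V) : Prop :=
  u ∈ U ∧ v ∈ U ∧ u ≠ v ∧ ¬ A u v ∧ ¬ A v u ∧ ∀ w ∈ U, ¬ Distinguishes A w u v

/-- `u,v` are true twins in the induced subdigraph on `U`. -/
def TrueTwinsOn (A : V → V → Prop) (U : Set V) (u v : V) : Prop :=
  u ∈ U ∧ v ∈ U ∧ u ≠ v ∧ A u v ∧ A v u ∧ ∀ w ∈ U, ¬ Distinguishes A w u v

/-- The induced subdigraph on `U` is point-determining: no pair of false twins. -/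
def PointDeterminingOn (A : V → V → Prop) (U : Set V) : Prop :=
  ∀ u v, ¬ FalseTwinsOn A U u v

/-- A triple `(x, {y,z})`: `x,y,z` are pairwise distinct and `y,z` are false
twins in `D - x`. `x` is the red vertex, `y,z` are the green vertices. -/
def IsTriple (A : V → V → Prop) (x y z : V) : Prop :=
  x ≠ y ∧ x ≠ z ∧ y ≠ z ∧ FalseTwinsOn A {x}ᶜ y z

/-- `S` is a homogeneous set: any two of its vertices are twins. -/
def Homogeneous (A : V → V → Prop) (S : Set V) : Prop :=
  ∀ u ∈ S, ∀ v ∈ S, u ≠ v → ∀ w, ¬ Distinguishes A w u v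

/-- `S` is a strong clique: arcs in both directions between any two distinct members. -/
def StrongClique (A : V → V → Prop) (S : Set V) : Prop :=
  ∀ u ∈ S, ∀ v ∈ S, u ≠ v → A u v ∧ A v u

/-- `S` is an independent set: no arcs between any two distinct members. -/
def IndepSet (A : V → V → Prop) (S : Set V) : Prop :=
  ∀ u ∈ S, ∀ v ∈ S, u ≠ v → ¬ A u v

/-- `P` is an `M`-partition of the induced subdigraph on `U`: the parts `P i`
partition `U`, a part with `M i i = 0` is independent, a part with `M i i = 1`
is a strong clique, and for `i ≠ j` all arcs from `P i` to `P j` are present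
iff `M i j = 1`. -/
def IsMPartitionOn (A : V → V → Prop) {n : ℕ} (M : Fin n → Fin n → Bool)
    (U : Set V) (P : Fin n → Set V) : Prop :=
  (∀ i, P i ⊆ U) ∧ (∀ v ∈ U, ∃! i, v ∈ P i) ∧
    ∀ i j, ∀ u ∈ P i, ∀ v ∈ P j, u ≠ v → (A u v ↔ M i j = true)

def HasMPartitionOn (A : V → V → Prop) {n : ℕ} (M : Fin n → Fin n → Bool)
    (U : Set V) : Prop :=
  ∃ P, IsMPartitionOn A M U P

/-- `D` is a minimal `M`-obstruction: it admits no `M`-partition, but every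
one-vertex-deleted induced subdigraph does. -/
def MinimalObstruction (A : V → V → Prop) {n : ℕ} (M : Fin n → Fin n → Bool) : Prop :=
  ¬ HasMPartitionOn A M Set.univ ∧ ∀ v : V, HasMPartitionOn A M {v}ᶜ
theorem stmt7 [Fintype V] {k l : ℕ} (A : V → V → Prop) (hirr : ∀ v, ¬ A v v)
    (M : Fin (k + l) → Fin (k + l) → Bool)
    (hdiag : ∀ i : Fin (k + l), M i i = true ↔ k ≤ (i : ℕ))
    (hk : 0 < k) (hl : 0 < l)
    (hobs : MinimalObstruction A M)
    (hft : ∀ u v : V, ¬ FalseTwinsOn A Set.univ u v)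
    (htt : ∀ u v : V, ¬ TrueTwinsOn A Set.univ u v) :
    Fintype.card V ≤ (k + 1) * (l + 1) := by

  classical
  by_cases hVempty : Fintype.card V = 0
  · simp [hVempty]
  obtain ⟨hno, hdel⟩ := hobs
  choose P hP using hdel
  have hmpos : 0 < k + l := by omega
  have hexu : ∀ z v : V, v ≠ z → ∃! i, v ∈ P z i := by
    intro z v hv
    exact (hP z).2.1 v (by simpa using hv)
  set σ : V → V → Fin (k + l) :=
    fun z v => if h : v ≠ z then (hexu z v h).choose else ⟨0, hmpos⟩ with hσ
  have hmem : ∀ z v : V, ∀ h : v ≠ z, v ∈ P z (σ z v) := by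
    intro z v h
    simp only [hσ, dif_pos h]
    exact (hexu z v h).choose_spec.1
  have hcompat : ∀ z u v : V, u ≠ z → v ≠ z → u ≠ v →
      (A u v ↔ M (σ z u) (σ z v) = true) := by
    intro z u v hu hv huv
    exact (hP z).2.2 (σ z u) (σ z v) u (hmem z u hu) v (hmem z v hv) huv
  -- key twin lemma
  have hdist : ∀ z u v : V, u ≠ z → v ≠ z → u ≠ v → σ z u = σ z v →
      Distinguishes A z u v ∧ ∀ w, w ≠ z → ¬ Distinguishes A w u v := by
    intro z u v hu hv huv hf
    have hnod : ∀ w, w ≠ z → ¬ Distinguishes A w u v := by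
      intro w hw hD
      obtain ⟨hwu, hwv, hc⟩ := hD
      have h1 := hcompat z u w hu hw (Ne.symm hwu)
      have h2 := hcompat z v w hv hw (Ne.symm hwv)
      have h3 := hcompat z w u hw hu hwu
      have h4 := hcompat z w v hw hv hwv
      rw [hf] at h1 h3
      rcases hc with ⟨h, h'⟩ | ⟨h, h'⟩ | ⟨h, h'⟩ | ⟨h, h'⟩ <;> tauto
    refine ⟨?_, hnod⟩
    by_contra hzD
    have hall : ∀ w, ¬ Distinguishes A w u v := by
      intro w
      by_cases hwz : w = z
      · subst hwz; exact hzD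
      · exact hnod w hwz
    have hAuv := hcompat z u v hu hv huv
    have hAvu := hcompat z v u hv hu (Ne.symm huv)
    rw [hf] at hAuv hAvu
    cases hMc : M (σ z v) (σ z v) with
    | false =>
        refine hft u v ⟨Set.mem_univ u, Set.mem_univ v, huv, ?_, ?_, fun w _ => hall w⟩
        · intro h
          have := hAuv.mp h
          rw [hMc] at this
          exact Bool.false_ne_true this
        · intro h
          have := hAvu.mp h
          rw [hMc] at this
          exact Bool.false_ne_true this
    | true =>
        exact htt u v ⟨Set.mem_univ u, Set.mem_univ v, huv, hAuv.mpr hMc,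
          hAvu.mpr hMc, fun w _ => hall w⟩
  set n := Fintype.card V with hn
  set Pz : V → Finset (V × V) := fun z =>
    Finset.univ.filter fun p => p.1 ≠ z ∧ p.2 ≠ z ∧ p.1 ≠ p.2 ∧ σ z p.1 = σ z p.2 with hPzdef
  set W : Finset (V × V × V) :=
    Finset.univ.filter fun t =>
      t.2.1 ≠ t.1 ∧ t.2.2 ≠ t.1 ∧ t.2.1 ≠ t.2.2 ∧ σ t.1 t.2.1 = σ t.1 t.2.2 with hWdef
  have hWcard : W.card = ∑ z : V, (Pz z).card := by
    rw [Finset.card_eq_sum_card_fiberwise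
      (f := fun t : V × V × V => t.1) (t := Finset.univ) (fun x _ => Finset.mem_univ _)]
    refine Finset.sum_congr rfl fun z _ => ?_
    refine Finset.card_bij (fun t _ => t.2) ?_ ?_ ?_
    · intro t ht
      rw [Finset.mem_filter] at ht
      obtain ⟨htW, htz⟩ := ht
      rw [hWdef, Finset.mem_filter] at htW
      rw [hPzdef]
      simp only [Finset.mem_filter, Finset.mem_univ, true_and]
      rw [← htz]
      exact htW.2
    · intro t ht t' ht' h
      rw [Finset.mem_filter] at ht ht'
      have h1 : t.1 = t'.1 := by rw [ht.2, ht'.2]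
      exact Prod.ext h1 h
    · intro p hp
      rw [hPzdef] at hp
      simp only [Finset.mem_filter, Finset.mem_univ, true_and] at hp
      refine ⟨(z, p), ?_, rfl⟩
      rw [Finset.mem_filter]
      refine ⟨?_, rfl⟩
      rw [hWdef]
      simp only [Finset.mem_filter, Finset.mem_univ, true_and]
      exact hp
  have hPzcard : ∀ z : V, 2 * (n - 1) ≤ (Pz z).card + 2 * (k + l) := by
    intro z
    have hscard : (Finset.univ.erase z).card = n - 1 := by
      rw [Finset.card_erase_of_mem (Finset.mem_univ z), Finset.card_univ, ← hn]
    have hFsum : ∑ c : Fin (k + l),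
        ((Finset.univ.erase z).filter fun v => σ z v = c).card = n - 1 := by
      rw [← hscard]
      exact (Finset.card_eq_sum_card_fiberwise
        (f := σ z) (t := Finset.univ) (fun x _ => Finset.mem_univ _)).symm
    have hPzdecomp : (Pz z).card = ∑ c : Fin (k + l),
        (((Finset.univ.erase z).filter fun v => σ z v = c).offDiag).card := by
      rw [Finset.card_eq_sum_card_fiberwise
        (f := fun p : V × V => σ z p.1) (t := Finset.univ) (fun x _ => Finset.mem_univ _)]
      refine Finset.sum_congr rfl fun c _ => ?_
      congr 1
      ext ⟨u, v⟩
      rw [hPzdef]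
      simp only [Finset.mem_filter, Finset.mem_offDiag, Finset.mem_univ, true_and,
        Finset.mem_erase]
      constructor
      · rintro ⟨⟨h1, h2, h3, h4⟩, h5⟩
        exact ⟨⟨⟨h1, trivial⟩, h5⟩, ⟨⟨h2, trivial⟩, h4.symm.trans h5⟩, h3⟩
      · rintro ⟨⟨⟨h1, _⟩, hc1⟩, ⟨⟨h2, _⟩, hc2⟩, h3⟩
        exact ⟨⟨h1, h2, h3, hc1.trans hc2.symm⟩, hc1⟩
    have hpoint : ∀ c : Fin (k + l),
        2 * (((Finset.univ.erase z).filter fun v => σ z v = c).card) ≤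
          (((Finset.univ.erase z).filter fun v => σ z v = c).offDiag).card + 2 := by
      intro c
      rw [Finset.offDiag_card]
      rcases Nat.eq_zero_or_pos (((Finset.univ.erase z).filter fun v => σ z v = c).card)
        with h | h
      · rw [h]; simp
      · obtain ⟨b, hb⟩ : ∃ b,
          (((Finset.univ.erase z).filter fun v => σ z v = c).card) = b + 1 :=
          ⟨(((Finset.univ.erase z).filter fun v => σ z v = c).card) - 1, by omega⟩
        rw [hb]
        have hmm : (b + 1) * (b + 1) - (b + 1) = (b + 1) * b := by
          rw [Nat.mul_succ, Nat.add_sub_cancel]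
        rw [hmm]
        have h2b : 2 * b ≤ (b + 1) * b := by nlinarith
        omega
    calc 2 * (n - 1)
        = ∑ c : Fin (k + l),
            2 * (((Finset.univ.erase z).filter fun v => σ z v = c).card) := by
          rw [← Finset.mul_sum, hFsum]
      _ ≤ ∑ c : Fin (k + l),
            ((((Finset.univ.erase z).filter fun v => σ z v = c).offDiag).card + 2) :=
          Finset.sum_le_sum fun c _ => hpoint c
      _ = (Pz z).card + 2 * (k + l) := by
          rw [Finset.sum_add_distrib, ← hPzdecomp]
          simp only [Finset.sum_const, Finset.card_univ, Fintype.card_fin, smul_eq_mul]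
          ring
  have hnn : n * n - n = n * (n - 1) := by
    rcases n with _ | b
    · simp
    · rw [Nat.succ_sub_one, Nat.mul_succ, Nat.add_sub_cancel]
  have hoffcard : (Finset.univ.offDiag : Finset (V × V)).card = n * n - n := by
    rw [Finset.offDiag_card, Finset.card_univ, ← hn]
  have hinjW : ∀ t ∈ W, ∀ t' ∈ W, t.2 = t'.2 → t = t' := by
    intro t ht t' ht' h2
    rw [hWdef] at ht ht'
    simp only [Finset.mem_filter, Finset.mem_univ, true_and] at ht ht'
    by_cases hz : t.1 = t'.1
    · exact Prod.ext hz h2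
    · exfalso
      obtain ⟨h1, h2', h3, h4⟩ := ht
      obtain ⟨h1', h2'', h3', h4'⟩ := ht'
      rw [← h2] at h4' h1' h2'' h3'
      have hd1 := (hdist t.1 t.2.1 t.2.2 h1 h2' h3 h4).2 t'.1 (fun hh => hz hh.symm)
      have hd2 := (hdist t'.1 t.2.1 t.2.2 h1' h2'' h3' h4').1
      exact hd1 hd2
  have hWle : W.card ≤ n * n - n := by
    rw [← hoffcard]
    apply Finset.card_le_card_of_injOn (fun t => t.2)
    · intro t ht
      have ht' := ht
      rw [hWdef] at ht'
      simp only [Finset.mem_coe, Finset.mem_filter, Finset.mem_univ, true_and] at ht'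
      exact Finset.mem_offDiag.mpr ⟨Finset.mem_univ _, Finset.mem_univ _, ht'.2.2.1⟩
    · intro t ht t' ht' h
      exact hinjW t (by simpa using ht) t' (by simpa using ht') h
  have hmain : n * (2 * (n - 1)) ≤ W.card + n * (2 * (k + l)) := by
    calc n * (2 * (n - 1)) = ∑ _z : V, 2 * (n - 1) := by
          rw [Finset.sum_const, Finset.card_univ, ← hn, smul_eq_mul]
      _ ≤ ∑ z : V, ((Pz z).card + 2 * (k + l)) := Finset.sum_le_sum fun z _ => hPzcard z
      _ = W.card + n * (2 * (k + l)) := by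
          rw [Finset.sum_add_distrib, ← hWcard, Finset.sum_const, Finset.card_univ, ← hn,
            smul_eq_mul]
  have hnpos : 0 < n := by omega
  have hbound : n - 1 ≤ 2 * (k + l) := by
    have h1 : n * (2 * (n - 1)) ≤ n * ((n - 1) + 2 * (k + l)) := by
      calc n * (2 * (n - 1)) ≤ W.card + n * (2 * (k + l)) := hmain
        _ ≤ (n * n - n) + n * (2 * (k + l)) := by omega
        _ = n * ((n - 1) + 2 * (k + l)) := by rw [hnn]; ring
    have h2 : 2 * (n - 1) ≤ (n - 1) + 2 * (k + l) :=
      Nat.le_of_mul_le_mul_left h1 hnpos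
    omega
  -- final contradiction setup
  by_contra hbig
  push_neg at hbig
  obtain ⟨q, hq⟩ : ∃ q, q = k * l := ⟨_, rfl⟩
  have hexp : (k + 1) * (l + 1) = q + k + l + 1 := by rw [hq]; ring
  have hklq : k + l ≤ q + 1 := by
    rw [hq]
    nlinarith
  rw [hexp] at hbig
  have hneq : n = 2 * (k + l) + 1 := by omega
  have hPzge : ∀ z : V, n - 1 ≤ (Pz z).card := by
    intro z
    have := hPzcard z
    omega
  have hWge : (Finset.univ.offDiag : Finset (V × V)).card ≤ W.card := by
    rw [hoffcard]
    calc n * n - n = n * (n - 1) := hnn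
      _ = ∑ _z : V, (n - 1) := by
          rw [Finset.sum_const, Finset.card_univ, ← hn, smul_eq_mul]
      _ ≤ ∑ z : V, (Pz z).card := Finset.sum_le_sum fun z _ => hPzge z
      _ = W.card := hWcard.symm
  have hsurj := Finset.surj_on_of_inj_on_of_card_le (s := W)
    (t := (Finset.univ.offDiag : Finset (V × V))) (fun t _ => t.2)
    (fun t ht => by
      have ht' := ht
      rw [hWdef] at ht'
      simp only [Finset.mem_filter, Finset.mem_univ, true_and] at ht'
      exact Finset.mem_offDiag.mpr ⟨Finset.mem_univ _, Finset.mem_univ _, ht'.2.2.1⟩)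
    (fun t t' ht ht' h => hinjW t ht t' ht' h)
    hWge
  have hpair : ∀ u v : V, u ≠ v → ∃ z, u ≠ z ∧ v ≠ z ∧ σ z u = σ z v := by
    intro u v huv
    obtain ⟨t, ht, hteq⟩ := hsurj (u, v)
      (Finset.mem_offDiag.mpr ⟨Finset.mem_univ u, Finset.mem_univ v, huv⟩)
    rw [hWdef] at ht
    simp only [Finset.mem_filter, Finset.mem_univ, true_and] at ht
    have hteq' : (u, v) = t.2 := hteq
    have h1 : t.2.1 = u := by rw [← hteq']
    have h2 : t.2.2 = v := by rw [← hteq']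
    exact ⟨t.1, h1 ▸ ht.1, h2 ▸ ht.2.1, by rw [← h1, ← h2]; exact ht.2.2.2⟩
  have hsym : ∀ u v : V, u ≠ v → (A u v ↔ A v u) := by
    intro u v huv
    obtain ⟨z, hu, hv, hf⟩ := hpair u v huv
    rw [hcompat z u v hu hv huv, hcompat z v u hv hu (Ne.symm huv), hf]
  set d : V → ℕ := fun y => (Finset.univ.filter fun w => A y w).card with hd
  have hparity : ∀ u v : V, u ≠ v → (d u + d v) % 2 = 1 := by
    intro u v huv
    obtain ⟨z, huz, hvz, hf⟩ := hpair u v huv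
    obtain ⟨hD, hnoD⟩ := hdist z u v huz hvz huv hf
    obtain ⟨hzu, hzv, hDc⟩ := hD
    have hone : (A u z ∧ ¬ A v z) ∨ (A v z ∧ ¬ A u z) := by
      rcases hDc with h | h | h | h
      · exact Or.inl h
      · exact Or.inr h
      · exact Or.inl ⟨(hsym z u hzu).mp h.1, fun hh => h.2 ((hsym z v hzv).mpr hh)⟩
      · exact Or.inr ⟨(hsym z v hzv).mp h.1, fun hh => h.2 ((hsym z u hzu).mpr hh)⟩
    have hdusum : d u + d v =
        ∑ w : V, ((if A u w then 1 else 0) + (if A v w then 1 else 0)) := by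
      rw [hd]
      simp only [Finset.card_filter]
      rw [← Finset.sum_add_distrib]
    have hzmem : z ∉ ({u, v} : Finset V) := by
      simp only [Finset.mem_insert, Finset.mem_singleton]
      push_neg
      exact ⟨hzu, hzv⟩
    have humem : u ∉ ({v} : Finset V) := by
      simp only [Finset.mem_singleton]
      exact huv
    have hsplit : ∑ w : V, ((if A u w then 1 else 0) + (if A v w then 1 else 0)) =
        (∑ w ∈ Finset.univ \ ({z, u, v} : Finset V),
          ((if A u w then 1 else 0) + (if A v w then 1 else 0))) +
        (∑ w ∈ ({z, u, v} : Finset V),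
          ((if A u w then 1 else 0) + (if A v w then 1 else 0))) :=
      (Finset.sum_sdiff (Finset.subset_univ _)).symm
    have hs3sum : ∑ w ∈ ({z, u, v} : Finset V),
        ((if A u w then 1 else 0) + (if A v w then 1 else 0)) =
        ((if A u z then 1 else 0) + (if A v z then 1 else 0)) +
        (((if A u u then 1 else 0) + (if A v u then 1 else 0)) +
         ((if A u v then 1 else 0) + (if A v v then 1 else 0))) := by
      rw [Finset.sum_insert hzmem, Finset.sum_insert humem, Finset.sum_singleton]
    have hfz : (if A u z then 1 else 0) + (if A v z then 1 else 0) = 1 := by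
      rcases hone with ⟨ha, hb⟩ | ⟨ha, hb⟩ <;> simp [ha, hb]
    have hfuv : ((if A u u then 1 else 0) + (if A v u then 1 else 0)) +
        ((if A u v then 1 else 0) + (if A v v then 1 else 0)) = if A u v then 2 else 0 := by
      by_cases h : A u v
      · have h' : A v u := (hsym u v huv).mp h
        simp [h, h', hirr u, hirr v]
      · have h' : ¬ A v u := fun hh => h ((hsym u v huv).mpr hh)
        simp [h, h', hirr u, hirr v]
    have heven : ∀ w ∈ Finset.univ \ ({z, u, v} : Finset V),
        ((if A u w then 1 else 0) + (if A v w then 1 else 0)) % 2 = 0 := by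
      intro w hw
      simp only [Finset.mem_sdiff, Finset.mem_univ, true_and, Finset.mem_insert,
        Finset.mem_singleton] at hw
      push_neg at hw
      obtain ⟨hwz, hwu, hwv⟩ := hw
      have hnd := hnoD w hwz
      have hiff : A u w ↔ A v w := by
        constructor
        · intro hh
          by_contra hcc
          exact hnd ⟨hwu, hwv, Or.inl ⟨hh, hcc⟩⟩
        · intro hh
          by_contra hcc
          exact hnd ⟨hwu, hwv, Or.inr (Or.inl ⟨hh, hcc⟩)⟩
      by_cases hcase : A u w
      · simp [hcase, hiff.mp hcase]
      · have hvw : ¬ A v w := fun hh => hcase (hiff.mpr hh)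
        simp [hcase, hvw]
    have hEmod : (∑ w ∈ Finset.univ \ ({z, u, v} : Finset V),
        ((if A u w then 1 else 0) + (if A v w then 1 else 0))) % 2 = 0 := by
      rw [Finset.sum_nat_mod]
      rw [Finset.sum_congr rfl heven]
      simp
    rw [hdusum, hsplit, hs3sum, hfz, hfuv]
    by_cases h : A u v
    · rw [if_pos h]
      omega
    · rw [if_neg h]
      omega
  have h3n : 3 ≤ Fintype.card V := by omega
  obtain ⟨s, -, hscard⟩ := Finset.exists_subset_card_eq
    (s := (Finset.univ : Finset V)) (n := 3) (by rw [Finset.card_univ]; exact h3n)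
  rw [Finset.card_eq_three] at hscard
  obtain ⟨a, b, c, hab, hac, hbc, -⟩ := hscard
  have p1 := hparity a b hab
  have p2 := hparity a c hac
  have p3 := hparity b c hbc
  omega
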